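/- arXiv:1401.4236 — 9 statements merged into one kernel-verified Lean document; each statement's English description precedes it below -/
import Mathlib

section
/- For all real numbers P ≥ 0, Q ≥ 0 and Δ ∈ [π/4, π/2], writing s = sin Δ and S = Q·s², there exist ρ ∈ [−1, 1] and Q' ∈ [0, Q] with (2s²Q' + 1 − ρ)(1 + ρ) > 0 such that (1/2)·log₂(1+P) + (1/2)·log₂(1+(√P + s·√Q')²) − (1/4)·log₂((2s²Q' + 1 − ρ)(1 + ρ)) + 2 ≤ R_out(P,Q,Δ) + 1/2. -/
open Real

/-- The piecewise closed-form outer-bound expression of Lemma 2 (in bits),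
with `S = Q·sin²Δ`. -/
noncomputable def Rout (P Q Δ : ℝ) : ℝ :=
  if Q * (sin Δ) ^ 2 ≤ 1 then logb 2 (P + 1) + 2
  else if P + 1 ≤ Q * (sin Δ) ^ 2 then (3 / 4) * logb 2 (P + 1) + 2
  else (1 / 2) * logb 2 (P + 1)
      + (1 / 2) * logb 2 (1 + (Real.sqrt P + Real.sqrt (Q * (sin Δ) ^ 2)) ^ 2)
      - (1 / 4) * logb 2 (2 * (Q * (sin Δ) ^ 2)) + 2

lemma logb2_two : logb 2 (2:ℝ) = 1 := by
  simp [Real.logb_self_eq_one]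

lemma logb2_four : logb 2 (4:ℝ) = 2 := by
  rw [show (4:ℝ) = 2^2 by norm_num, Real.logb_pow, logb2_two]
  norm_num

/-- Lemma 2: there are admissible `ρ ∈ [−1,1]` and `Q' ∈ [0,Q]` for which the genie-free
outer-bound expression is upper bounded by the closed form `Rout` plus 1/2 bit. -/
theorem stmt_1 (P Q Δ : ℝ) (hP : 0 ≤ P) (hQ : 0 ≤ Q)
    (hΔ : Δ ∈ Set.Icc (π / 4) (π / 2)) :
    ∃ ρ ∈ Set.Icc (-1 : ℝ) 1, ∃ Q' ∈ Set.Icc (0 : ℝ) Q,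
      0 < (2 * (sin Δ) ^ 2 * Q' + 1 - ρ) * (1 + ρ) ∧
      (1 / 2) * logb 2 (1 + P)
        + (1 / 2) * logb 2 (1 + (Real.sqrt P + sin Δ * Real.sqrt Q') ^ 2)
        - (1 / 4) * logb 2 ((2 * (sin Δ) ^ 2 * Q' + 1 - ρ) * (1 + ρ)) + 2
      ≤ Rout P Q Δ + 1 / 2 := by
  obtain ⟨h1, h2⟩ := hΔ
  have hπ := Real.pi_pos
  have hs : 0 < sin Δ := Real.sin_pos_of_pos_of_lt_pi (by linarith) (by linarith)
  have hs2 : 0 < (sin Δ)^2 := by positivity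
  have hP1 : (0:ℝ) < P + 1 := by linarith
  by_cases hc1 : Q * (sin Δ)^2 ≤ 1
  · -- S ≤ 1 : take ρ = 0, Q' = 0
    refine ⟨0, by constructor <;> norm_num, 0, ⟨le_refl 0, hQ⟩, by norm_num, ?_⟩
    rw [Rout, if_pos hc1]
    simp only [mul_zero, Real.sqrt_zero, add_zero, sub_zero, mul_one]
    rw [Real.sq_sqrt hP, show (0:ℝ) + 1 = 1 by norm_num, Real.logb_one,
      show (1:ℝ) + P = P + 1 by ring]
    linarith
  · push_neg at hc1
    by_cases hc2 : P + 1 ≤ Q * (sin Δ)^2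
    · -- middle regime : ρ = 1, Q' = (P+1)/sin²Δ
      refine ⟨1, by constructor <;> norm_num, (P+1)/(sin Δ)^2,
        ⟨by positivity, by rw [div_le_iff₀ hs2]; linarith⟩, ?_, ?_⟩
      · have : 2 * (sin Δ)^2 * ((P+1)/(sin Δ)^2) = 2 * (P+1) := by
          field_simp
        rw [this]; nlinarith
      · have hkey : 2 * (sin Δ)^2 * ((P+1)/(sin Δ)^2) = 2 * (P+1) := by
          field_simp
        have hsq : sin Δ * Real.sqrt ((P+1)/(sin Δ)^2) = Real.sqrt (P+1) := by
          have e : (sin Δ)^2 * ((P+1)/(sin Δ)^2) = P + 1 := by field_simp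
          rw [← Real.sqrt_sq hs.le, ← Real.sqrt_mul (Real.sq_sqrt hs2.le ▸ hs2.le),
            Real.sq_sqrt hs2.le, e]
        rw [Rout, if_neg (not_le.mpr hc1), if_pos hc2, hkey, hsq]
        have harg : (2 * (P+1) + 1 - 1) * (1 + 1) = 4 * (P+1) := by ring
        rw [harg]
        -- bound the middle log
        have hab : Real.sqrt P * Real.sqrt (P+1) ≤ P + 1/2 := by
          rw [← Real.sqrt_mul hP]
          have : Real.sqrt (P * (P+1)) ≤ Real.sqrt ((P + 1/2)^2) :=
            Real.sqrt_le_sqrt (by nlinarith)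
          rwa [Real.sqrt_sq (by linarith)] at this
        have hmid : 1 + (Real.sqrt P + Real.sqrt (P+1))^2 ≤ 4 * (P+1) := by
          have e1 : Real.sqrt P ^ 2 = P := Real.sq_sqrt hP
          have e2 : Real.sqrt (P+1) ^ 2 = P + 1 := Real.sq_sqrt hP1.le
          nlinarith
        have hmidpos : 0 < 1 + (Real.sqrt P + Real.sqrt (P+1))^2 := by positivity
        have hlog1 : logb 2 (1 + (Real.sqrt P + Real.sqrt (P+1))^2)
            ≤ logb 2 (4 * (P+1)) :=
          Real.logb_le_logb_of_le (by norm_num) (by positivity) hmid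
        have hlog2 : logb 2 (4 * (P+1)) = 2 + logb 2 (P+1) := by
          rw [Real.logb_mul (by norm_num) (by positivity), logb2_four]
        rw [show (1:ℝ) + P = P + 1 by ring]
        have hlog3 : logb 2 (4 * (P+1)) = 2 + logb 2 (P+1) := hlog2
        linarith [hlog1, hlog3, hlog2 ▸ hlog1]
    · -- last regime : ρ = 1, Q' = Q
      push_neg at hc2
      refine ⟨1, by constructor <;> norm_num, Q, ⟨hQ, le_refl Q⟩, ?_, ?_⟩
      · nlinarith
      · have hsq : sin Δ * Real.sqrt Q = Real.sqrt (Q * (sin Δ)^2) := by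
          rw [mul_comm Q, Real.sqrt_mul hs2.le, Real.sqrt_sq hs.le]
        rw [Rout, if_neg (not_le.mpr hc1), if_neg (not_le.mpr hc2), hsq]
        have harg : (2 * (sin Δ)^2 * Q + 1 - 1) * (1 + 1) = 4 * (Q * (sin Δ)^2) := by
          ring
        rw [harg]
        have hlogA : logb 2 (4 * (Q * (sin Δ)^2))
            = 2 + logb 2 (Q * (sin Δ)^2) := by
          rw [Real.logb_mul (by norm_num) (by positivity), logb2_four]
        have hlogB : logb 2 (2 * (Q * (sin Δ)^2))
            = 1 + logb 2 (Q * (sin Δ)^2) := by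
          rw [Real.logb_mul (by norm_num) (by positivity), logb2_two]
        rw [show (1:ℝ) + P = P + 1 by ring]
        linarith
end

section
/- For all real numbers P ≥ 0, Q ≥ 0 and Δ ∈ [π/4, π/2], writing S = Q·sin²Δ, the outer- and inner-bound expressions satisfy R_out(P,Q,Δ) − R_in(P,S) ≤ 9/2. -/
open Real

/-- The piecewise closed-form inner-bound expression of Lemma 4 (in bits). -/
noncomputable def Rin (P S : ℝ) : ℝ :=
  if S ≤ 1 then (1 / 2) * logb 2 (1 + P / 2) + (1 / 2) * logb 2 (1 + P / (2 + 2 * S))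
  else if P + 1 ≤ S then (3 / 4) * logb 2 (1 + P / 2) - 1
  else (1 / 2) * logb 2 (1 + P / 2) + (1 / 2) * logb 2 (1 / 2 + (P + 2) / (2 * S))
      + (1 / 4) * logb 2 S - 5 / 4

private lemma lb2 : (1:ℝ) < 2 := one_lt_two

private lemma logb_mono {x y : ℝ} (hx : 0 < x) (hxy : x ≤ y) :
    logb 2 x ≤ logb 2 y := Real.logb_le_logb_of_le lb2 hx hxy

/-- Theorem 7 (finite gap): the closed-form outer and inner bounds differ by at most 9/2 bits. -/
theorem stmt_3 (P Q Δ : ℝ) (hP : 0 ≤ P) (hQ : 0 ≤ Q)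
    (hΔ : Δ ∈ Set.Icc (π / 4) (π / 2)) :
    Rout P Q Δ - Rin P (Q * (sin Δ) ^ 2) ≤ 9 / 2 := by
  set S := Q * sin Δ ^ 2 with hSdef
  have hS : 0 ≤ S := mul_nonneg hQ (sq_nonneg _)
  have hP1 : (0:ℝ) < P + 1 := by linarith
  have l2 : logb 2 2 = 1 := Real.logb_self_eq_one lb2
  unfold Rout Rin
  split_ifs with h1 h2
  · -- S ≤ 1
    have e1 : logb 2 ((P+1)/2) = logb 2 (P+1) - 1 := by
      rw [Real.logb_div (by positivity) (by norm_num), l2]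
    have e2 : logb 2 ((P+1)/4) = logb 2 (P+1) - 2 := by
      have : (4:ℝ) = 2 * 2 := by norm_num
      rw [Real.logb_div (by positivity) (by norm_num), this,
        Real.logb_mul (by norm_num) (by norm_num), l2]; ring
    have b1 : logb 2 ((P+1)/2) ≤ logb 2 (1 + P/2) :=
      logb_mono (by positivity) (by linarith)
    have b2 : logb 2 ((P+1)/4) ≤ logb 2 (1 + P/(2+2*S)) := by
      refine logb_mono (by positivity) ?_
      have h22 : (0:ℝ) < 2 + 2*S := by linarith
      have : P/4 ≤ P/(2+2*S) := by
        apply div_le_div_of_nonneg_left hP h22; linarith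
      linarith
    rw [e1] at b1; rw [e2] at b2; linarith
  · -- P+1 ≤ S
    have e1 : logb 2 ((P+1)/2) = logb 2 (P+1) - 1 := by
      rw [Real.logb_div (by positivity) (by norm_num), l2]
    have b1 : logb 2 ((P+1)/2) ≤ logb 2 (1 + P/2) :=
      logb_mono (by positivity) (by linarith)
    rw [e1] at b1; linarith
  · -- 1 < S < P+1
    push_neg at h1 h2
    have hS0 : (0:ℝ) < S := lt_trans one_pos h1
    have hM : (0:ℝ) < P + 1 + S := by linarith
    have sqP : Real.sqrt P ^ 2 = P := Real.sq_sqrt hP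
    have sqS : Real.sqrt S ^ 2 = S := Real.sq_sqrt hS
    have hb1 : 1 + (Real.sqrt P + Real.sqrt S)^2 ≤ 2 * (P + 1 + S) := by
      nlinarith [sq_nonneg (Real.sqrt P - Real.sqrt S)]
    have e2M : logb 2 (2 * (P+1+S)) = 1 + logb 2 (P+1+S) := by
      rw [Real.logb_mul (by norm_num) (by positivity), l2]
    have B1 : logb 2 (1 + (Real.sqrt P + Real.sqrt S)^2) ≤ 1 + logb 2 (P+1+S) := by
      rw [← e2M]; exact logb_mono (by positivity) hb1
    have e2S : logb 2 (2 * S) = 1 + logb 2 S := by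
      rw [Real.logb_mul (by norm_num) (by positivity), l2]
    have e1 : logb 2 ((P+1)/2) = logb 2 (P+1) - 1 := by
      rw [Real.logb_div (by positivity) (by norm_num), l2]
    have B2 : logb 2 (P+1) - 1 ≤ logb 2 (1 + P/2) := by
      rw [← e1]; exact logb_mono (by positivity) (by linarith)
    have eq3 : logb 2 ((P+1+S)/(2*S)) = logb 2 (P+1+S) - 1 - logb 2 S := by
      rw [Real.logb_div (by positivity) (by positivity), e2S]; ring
    have B3 : logb 2 (P+1+S) - 1 - logb 2 S ≤ logb 2 (1/2 + (P+2)/(2*S)) := by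
      rw [← eq3]
      refine logb_mono (by positivity) ?_
      have h2S : (0:ℝ) < 2*S := by linarith
      rw [div_add_div _ _ (by norm_num : (2:ℝ) ≠ 0) (ne_of_gt h2S)]
      rw [div_le_div_iff₀ h2S (by positivity)]
      ring_nf
      nlinarith
    linarith
end

section
/- For all real numbers P ≥ 0 and 0 ≤ S ≤ 1, one has [log₂(P+1) + 2] − [(1/2)·log₂(1+P/2) + (1/2)·log₂(1+P/(2+2S))] ≤ 7/2. -/
open Real

/-- Low-interference case (`S ≤ 1`) of the finite-gap theorem. -/
theorem stmt_4 (P S : ℝ) (hP : 0 ≤ P) (hS0 : 0 ≤ S) (hS1 : S ≤ 1) :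
    (logb 2 (P + 1) + 2)
      - ((1 / 2) * logb 2 (1 + P / 2) + (1 / 2) * logb 2 (1 + P / (2 + 2 * S)))
    ≤ 7 / 2 := by
  have hP1 : (0:ℝ) < P + 1 := by linarith
  have h2 : (0:ℝ) < 2 + 2 * S := by linarith
  have hdiv2 : logb 2 ((P + 1) / 2) = logb 2 (P + 1) - 1 := by
    rw [Real.logb_div (ne_of_gt hP1) (by norm_num), Real.logb_self_eq_one (by norm_num)]
  have hdiv4 : logb 2 ((P + 1) / 4) = logb 2 (P + 1) - 2 := by
    rw [Real.logb_div (ne_of_gt hP1) (by norm_num)]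
    have : (4:ℝ) = 2 ^ (2:ℕ) := by norm_num
    rw [this, Real.logb_pow, Real.logb_self_eq_one (by norm_num)]
    ring
  have h1 : logb 2 (P + 1) - 1 ≤ logb 2 (1 + P / 2) := by
    rw [← hdiv2]
    exact Real.logb_le_logb_of_le (by norm_num) (by positivity) (by linarith)
  have hfrac : P / 4 ≤ P / (2 + 2 * S) := by
    apply div_le_div_of_nonneg_left hP h2
    linarith
  have h4 : logb 2 (P + 1) - 2 ≤ logb 2 (1 + P / (2 + 2 * S)) := by
    rw [← hdiv4]
    exact Real.logb_le_logb_of_le (by norm_num) (by positivity) (by linarith)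
  linarith
end

section
/- For all real numbers P ≥ 0 and S with 1 < S < P+1, one has [(1/2)·log₂(P+1) + (1/2)·log₂(1+(√P+√S)²) − (1/4)·log₂(2S) + 2] − [(1/2)·log₂(1+P/2) + (1/2)·log₂(1/2+(P+2)/(2S)) + (1/4)·log₂(S) − 5/4] ≤ 9/2. -/
open Real

/-- Intermediate-interference case (`1 < S < P+1`) of the finite-gap theorem. -/
theorem stmt_6 (P S : ℝ) (hP : 0 ≤ P) (hS1 : 1 < S) (hS2 : S < P + 1) :
    ((1 / 2) * logb 2 (P + 1) + (1 / 2) * logb 2 (1 + (Real.sqrt P + Real.sqrt S) ^ 2)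
        - (1 / 4) * logb 2 (2 * S) + 2)
      - ((1 / 2) * logb 2 (1 + P / 2) + (1 / 2) * logb 2 (1 / 2 + (P + 2) / (2 * S))
        + (1 / 4) * logb 2 S - 5 / 4)
    ≤ 9 / 2 := by
  have hS0 : (0:ℝ) < S := lt_trans one_pos hS1
  have hP1 : (0:ℝ) < P + 1 := by linarith
  have h1P : (0:ℝ) < 1 + P / 2 := by linarith
  have hW : (0:ℝ) < 1 / 2 + (P + 2) / (2 * S) := by positivity
  have hN : (0:ℝ) < 1 + (Real.sqrt P + Real.sqrt S) ^ 2 := by positivity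
  have hb : (1:ℝ) < 2 := one_lt_two
  -- key algebraic inequality
  have key : (P + 1) * (1 + (Real.sqrt P + Real.sqrt S) ^ 2)
      ≤ 8 * ((1 + P / 2) * ((1 / 2 + (P + 2) / (2 * S)) * S)) := by
    have hsP : Real.sqrt P ^ 2 = P := Real.sq_sqrt hP
    have hsS : Real.sqrt S ^ 2 = S := Real.sq_sqrt hS0.le
    have h2 : (Real.sqrt P + Real.sqrt S) ^ 2 ≤ 2 * P + 2 * S := by
      nlinarith [sq_nonneg (Real.sqrt P - Real.sqrt S)]
    have hRHS : 8 * ((1 + P / 2) * ((1 / 2 + (P + 2) / (2 * S)) * S))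
        = 2 * (P + 2) * (P + S + 2) := by
      field_simp; ring
    rw [hRHS]
    nlinarith [h2, hP1, hS0]
  have hlog : logb 2 ((P + 1) * (1 + (Real.sqrt P + Real.sqrt S) ^ 2))
      ≤ logb 2 (8 * ((1 + P / 2) * ((1 / 2 + (P + 2) / (2 * S)) * S))) :=
    Real.logb_le_logb_of_le hb (by positivity) key
  have e8 : logb 2 (8:ℝ) = 3 := by
    have : (8:ℝ) = 2 ^ (3:ℕ) := by norm_num
    rw [this, Real.logb_pow, Real.logb_self_eq_one hb]
    norm_num
  rw [Real.logb_mul hP1.ne' hN.ne',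
      Real.logb_mul (by norm_num) (by positivity),
      Real.logb_mul h1P.ne' (by positivity),
      Real.logb_mul hW.ne' hS0.ne', e8] at hlog
  have e2S : logb 2 (2 * S) = 1 + logb 2 S := by
    rw [Real.logb_mul (by norm_num) hS0.ne', Real.logb_self_eq_one hb]
  rw [e2S]
  linarith [hlog]
end

section
/- For all real numbers P ≥ 0 and Q ≥ 0, one has [(1/2)·log₂(1+P) + (1/2)·log₂(1+P+Q+2√(PQ)) − (1/2)·log₂(1+Q) + 3/2] − [(1/2)·log₂(1+Q+P/2) − (1/2)·log₂(1+Q) + (1/2)·log₂(1+P/2) − 3] ≤ 6. -/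
open Real

/-- Theorem 10 (finite gap for circular uniform phase fading): the outer bound `R^OUT-C`
and the inner bound `R^IN-U` at `α = 1/2` differ by at most 6 bits. -/
theorem stmt_7 (P Q : ℝ) (hP : 0 ≤ P) (hQ : 0 ≤ Q) :
    ((1 / 2) * logb 2 (1 + P) + (1 / 2) * logb 2 (1 + P + Q + 2 * Real.sqrt (P * Q))
        - (1 / 2) * logb 2 (1 + Q) + 3 / 2)
      - ((1 / 2) * logb 2 (1 + Q + P / 2) - (1 / 2) * logb 2 (1 + Q)
        + (1 / 2) * logb 2 (1 + P / 2) - 3)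
    ≤ 6 := by
  set s := Real.sqrt (P * Q) with hs
  have hsnn : 0 ≤ s := Real.sqrt_nonneg _
  have hAM : 2 * s ≤ P + Q := by
    have h1 : s = Real.sqrt P * Real.sqrt Q := by rw [hs, Real.sqrt_mul hP]
    nlinarith [sq_nonneg (Real.sqrt P - Real.sqrt Q), Real.sq_sqrt hP, Real.sq_sqrt hQ]
  have hA : (0:ℝ) < 1 + P := by linarith
  have hB : (0:ℝ) < 1 + P + Q + 2 * s := by linarith
  have hC : (0:ℝ) < 1 + Q + P / 2 := by linarith
  have hD : (0:ℝ) < 1 + P / 2 := by linarith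
  have hkey : (1 + P) * (1 + P + Q + 2 * s) ≤ 8 * ((1 + Q + P / 2) * (1 + P / 2)) := by
    nlinarith [mul_nonneg hP hQ, mul_nonneg hP hsnn, sq_nonneg P]
  have hlogAB : logb 2 (1 + P) + logb 2 (1 + P + Q + 2 * s)
      = logb 2 ((1 + P) * (1 + P + Q + 2 * s)) := (Real.logb_mul hA.ne' hB.ne').symm
  have hlogCD : logb 2 (1 + Q + P / 2) + logb 2 (1 + P / 2)
      = logb 2 ((1 + Q + P / 2) * (1 + P / 2)) := (Real.logb_mul hC.ne' hD.ne').symm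
  have h8 : logb 2 (8:ℝ) = 3 := by
    rw [show (8:ℝ) = 2 ^ (3:ℕ) by norm_num, Real.logb_pow, Real.logb_self_eq_one] <;> norm_num
  have hmono : logb 2 ((1 + P) * (1 + P + Q + 2 * s))
      ≤ 3 + logb 2 ((1 + Q + P / 2) * (1 + P / 2)) := by
    have := Real.logb_le_logb_of_le (b := 2) (by norm_num) (mul_pos hA hB) hkey
    rwa [Real.logb_mul (by norm_num) (mul_pos hC hD).ne', h8] at this
  linarith [hlogAB, hlogCD, hmono]
end

section
/- For every real Q > 0, one has (1/(2π))·∫₀^{2π} ln(1 + Q·sin²t) dt ≥ ln(1+Q) − 2 + (2/√Q)·arctan(√Q). -/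
open Real

private lemma pos1 (Q : ℝ) (hQ : 0 < Q) (u : ℝ) : 0 < 1 + Q * u ^ 2 := by positivity

private lemma contF (Q : ℝ) (hQ : 0 < Q) :
    Continuous (fun t : ℝ => Real.log (1 + Q * (sin t) ^ 2)) := by
  apply Continuous.log (by continuity)
  intro t; exact (pos1 Q hQ (sin t)).ne'

private lemma contG (Q : ℝ) (hQ : 0 < Q) :
    Continuous (fun u : ℝ => Real.log (1 + Q * u ^ 2)) := by
  apply Continuous.log (by continuity)
  intro u; exact (pos1 Q hQ u).ne'

private lemma integral01 (Q : ℝ) (hQ : 0 < Q) :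
    ∫ u in (0:ℝ)..1, Real.log (1 + Q * u ^ 2)
      = Real.log (1 + Q) - 2 + (2 / Real.sqrt Q) * Real.arctan (Real.sqrt Q) := by
  have hs : (0:ℝ) < Real.sqrt Q := Real.sqrt_pos.2 hQ
  have hsq : Real.sqrt Q ^ 2 = Q := Real.sq_sqrt hQ.le
  set F : ℝ → ℝ := fun u => u * Real.log (1 + Q * u ^ 2) - 2 * u
      + (2 / Real.sqrt Q) * Real.arctan (Real.sqrt Q * u) with hF
  have hderiv : ∀ u ∈ Set.uIcc (0:ℝ) 1, HasDerivAt F (Real.log (1 + Q * u ^ 2)) u := by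
    intro u _
    have hpos := pos1 Q hQ u
    have h1 : HasDerivAt (fun u : ℝ => 1 + Q * u ^ 2) (Q * (2 * u)) u := by
      simpa using ((hasDerivAt_pow 2 u).const_mul Q).const_add 1
    have hlog : HasDerivAt (fun u : ℝ => Real.log (1 + Q * u ^ 2))
        (Q * (2 * u) / (1 + Q * u ^ 2)) u := h1.log hpos.ne'
    have hmul : HasDerivAt (fun u : ℝ => u * Real.log (1 + Q * u ^ 2))
        (1 * Real.log (1 + Q * u ^ 2) + u * (Q * (2 * u) / (1 + Q * u ^ 2))) u :=
      (hasDerivAt_id u).mul hlog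
    have hat : HasDerivAt (fun u : ℝ => Real.arctan (Real.sqrt Q * u))
        ((1 / (1 + (Real.sqrt Q * u) ^ 2)) * Real.sqrt Q) u :=
      (Real.hasDerivAt_arctan (Real.sqrt Q * u)).comp u
        (by simpa using (hasDerivAt_id u).const_mul (Real.sqrt Q))
    have := ((hmul.sub ((hasDerivAt_id u).const_mul 2)).add (hat.const_mul (2 / Real.sqrt Q)))
    refine this.congr_deriv ?_
    have h2 : (Real.sqrt Q * u) ^ 2 = Q * u ^ 2 := by rw [mul_pow, hsq]
    rw [h2]
    field_simp
    ring
  rw [intervalIntegral.integral_eq_sub_of_hasDerivAt hderiv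
    ((contG Q hQ).intervalIntegrable 0 1)]
  simp [hF]

/-- Key integral inequality for the outer bound with circular uniform phase fading. -/
theorem stmt_10 (Q : ℝ) (hQ : 0 < Q) :
    (1 / (2 * π)) * ∫ t in (0 : ℝ)..(2 * π), Real.log (1 + Q * (sin t) ^ 2)
      ≥ Real.log (1 + Q) - 2 + (2 / Real.sqrt Q) * Real.arctan (Real.sqrt Q) := by
  set f : ℝ → ℝ := fun t => Real.log (1 + Q * (sin t) ^ 2) with hf
  set g : ℝ → ℝ := fun u => Real.log (1 + Q * u ^ 2) with hg
  have hcont := contF Q hQ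
  have hcontg := contG Q hQ
  have hint : ∀ a b : ℝ, IntervalIntegrable f MeasureTheory.volume a b :=
    fun a b => hcont.intervalIntegrable a b
  have hpi : (0:ℝ) < π := Real.pi_pos
  -- periodicity
  have hper : Function.Periodic f π := by
    intro t; simp [hf, Real.sin_add_pi]
  -- step A : reduce to [0, π]
  have hA : (∫ t in (0:ℝ)..(2*π), f t) = 2 * ∫ t in (0:ℝ)..π, f t := by
    have h1 : (∫ t in (0:ℝ)..(2*π), f t) = (∫ t in (0:ℝ)..π, f t) + ∫ t in π..(2*π), f t :=
      (intervalIntegral.integral_add_adjacent_intervals (hint 0 π) (hint π (2*π))).symm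
    have h2 : (∫ t in π..(2*π), f t) = ∫ t in (0:ℝ)..π, f t := by
      have := hper.intervalIntegral_add_eq π 0
      simpa [two_mul] using this
    rw [h1, h2]; ring
  -- step B : reduce to [0, π/2]
  have hB : (∫ t in (0:ℝ)..π, f t) = 2 * ∫ t in (0:ℝ)..(π/2), f t := by
    have h1 : (∫ t in (0:ℝ)..π, f t) = (∫ t in (0:ℝ)..(π/2), f t) + ∫ t in (π/2)..π, f t :=
      (intervalIntegral.integral_add_adjacent_intervals (hint 0 (π/2)) (hint (π/2) π)).symm
    have h2 : (∫ t in (π/2)..π, f t) = ∫ t in (0:ℝ)..(π/2), f t := by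
      have h3 := intervalIntegral.integral_comp_sub_left (a := (0:ℝ)) (b := π/2) f π
      have h4 : (fun x => f (π - x)) = f := by
        funext x; simp [hf, Real.sin_pi_sub]
      rw [h4] at h3
      have e1 : π - π/2 = π/2 := by ring
      rw [e1, sub_zero] at h3
      exact h3.symm
    rw [h1, h2]; ring
  -- step C : Jordan's inequality bound
  have hC : (∫ t in (0:ℝ)..(π/2), g (2/π * t)) ≤ ∫ t in (0:ℝ)..(π/2), f t := by
    apply intervalIntegral.integral_mono_on (by positivity)
      ((hcontg.comp (by continuity)).intervalIntegrable 0 (π/2)) (hint 0 (π/2))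
    intro t ht
    have ht0 : 0 ≤ t := ht.1
    have ht2 : t ≤ π/2 := ht.2
    have hj : 2/π * t ≤ sin t := Real.mul_le_sin ht0 ht2
    have h0 : 0 ≤ 2/π * t := by positivity
    have hsq : (2/π * t) ^ 2 ≤ (sin t) ^ 2 := by
      apply pow_le_pow_left₀ h0 hj
    apply Real.log_le_log (pos1 Q hQ _)
    nlinarith
  -- step D : change of variables
  have hD : (∫ t in (0:ℝ)..(π/2), g (2/π * t)) = (π/2) * ∫ u in (0:ℝ)..1, g u := by
    have hc : (2/π : ℝ) ≠ 0 := by positivity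
    have := intervalIntegral.integral_comp_mul_left (a := (0:ℝ)) (b := π/2) g hc
    rw [this]
    have e0 : 2/π * 0 = (0:ℝ) := by ring
    have e1 : 2/π * (π/2) = (1:ℝ) := by field_simp
    rw [e0, e1, smul_eq_mul]
    have : (2/π : ℝ)⁻¹ = π/2 := by
      rw [div_eq_mul_inv, mul_inv, inv_inv]; ring
    rw [this]
  -- combine
  set I := Real.log (1 + Q) - 2 + (2 / Real.sqrt Q) * Real.arctan (Real.sqrt Q) with hI
  have hval : (∫ u in (0:ℝ)..1, g u) = I := integral01 Q hQ
  have hmain : (∫ t in (0:ℝ)..(2*π), f t) ≥ 2 * π * I := by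
    rw [hA, hB]
    have : (π/2) * I ≤ ∫ t in (0:ℝ)..(π/2), f t := by
      rw [← hval, ← hD]; exact hC
    nlinarith
  have h2pi : (0:ℝ) < 1 / (2*π) := by positivity
  calc (1 / (2 * π)) * ∫ t in (0:ℝ)..(2*π), f t
      ≥ (1 / (2 * π)) * (2 * π * I) := by
        apply mul_le_mul_of_nonneg_left hmain h2pi.le
    _ = I := by field_simp
end

section
/- For all real numbers p ≥ 0 and q > 0, one has (2/π)·∫₀^{π/2} ln(1 + p/(1 + (4q/π²)·t²)) dt = ln((1+p+q)/(1+q)) + 2·√((1+p)/q)·arctan(√(q/(1+p))) − (2/√q)·arctan(√q). -/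
open Real

/-- Closed-form evaluation of the Jordan-bounded interference-as-noise rate integral. -/
theorem stmt_12 (p q : ℝ) (hp : 0 ≤ p) (hq : 0 < q) :
    (2 / π) * ∫ t in (0 : ℝ)..(π / 2), Real.log (1 + p / (1 + (4 * q / π ^ 2) * t ^ 2))
      = Real.log ((1 + p + q) / (1 + q))
        + 2 * Real.sqrt ((1 + p) / q) * Real.arctan (Real.sqrt (q / (1 + p)))
        - (2 / Real.sqrt q) * Real.arctan (Real.sqrt q) := by
  have hπ : (0:ℝ) < π := Real.pi_pos
  set a : ℝ := 2 * Real.sqrt q / π with ha_def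
  set b : ℝ := Real.sqrt (1 + p) with hb_def
  have hsq : Real.sqrt q > 0 := Real.sqrt_pos.mpr hq
  have ha : 0 < a := by positivity
  have hb : 0 < b := Real.sqrt_pos.mpr (by linarith)
  have ha2 : a ^ 2 = 4 * q / π ^ 2 := by
    rw [ha_def]; rw [div_pow, mul_pow, Real.sq_sqrt hq.le]; ring
  have hb2 : b ^ 2 = 1 + p := Real.sq_sqrt (by linarith)
  -- antiderivative
  set F : ℝ → ℝ := fun t => t * Real.log (b ^ 2 + a ^ 2 * t ^ 2)
      - t * Real.log (1 + a ^ 2 * t ^ 2)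
      + (2 * b / a) * Real.arctan (a * t / b) - (2 / a) * Real.arctan (a * t) with hF
  have hderiv : ∀ t ∈ Set.uIcc (0:ℝ) (π/2),
      HasDerivAt F (Real.log (1 + p / (1 + (4 * q / π ^ 2) * t ^ 2))) t := by
    intro t _
    have hD1 : (0:ℝ) < b ^ 2 + a ^ 2 * t ^ 2 := by positivity
    have hD2 : (0:ℝ) < 1 + a ^ 2 * t ^ 2 := by positivity
    have h1 : HasDerivAt (fun t : ℝ => b ^ 2 + a ^ 2 * t ^ 2) (a ^ 2 * (2 * t)) t := by
      simpa using (((hasDerivAt_pow 2 t).const_mul (a ^ 2)).const_add (b ^ 2))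
    have h2 : HasDerivAt (fun t : ℝ => 1 + a ^ 2 * t ^ 2) (a ^ 2 * (2 * t)) t := by
      simpa using (((hasDerivAt_pow 2 t).const_mul (a ^ 2)).const_add (1:ℝ))
    have hL1 := h1.log hD1.ne'
    have hL2 := h2.log hD2.ne'
    have hA : HasDerivAt (fun t : ℝ => t * Real.log (b ^ 2 + a ^ 2 * t ^ 2))
        (1 * Real.log (b ^ 2 + a ^ 2 * t ^ 2) + t * (a ^ 2 * (2 * t) / (b ^ 2 + a ^ 2 * t ^ 2))) t :=
      (hasDerivAt_id t).mul hL1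
    have hB : HasDerivAt (fun t : ℝ => t * Real.log (1 + a ^ 2 * t ^ 2))
        (1 * Real.log (1 + a ^ 2 * t ^ 2) + t * (a ^ 2 * (2 * t) / (1 + a ^ 2 * t ^ 2))) t :=
      (hasDerivAt_id t).mul hL2
    have hlin1 : HasDerivAt (fun t : ℝ => a * t / b) (a / b) t := by
      simpa using ((hasDerivAt_id t).const_mul a).div_const b
    have hlin2 : HasDerivAt (fun t : ℝ => a * t) a t := by
      simpa using (hasDerivAt_id t).const_mul a
    have harc1 : HasDerivAt (fun t : ℝ => Real.arctan (a * t / b))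
        (1 / (1 + (a * t / b) ^ 2) * (a / b)) t :=
      HasDerivAt.comp (h₂ := Real.arctan) t (Real.hasDerivAt_arctan (a * t / b)) hlin1
    have harc2 : HasDerivAt (fun t : ℝ => Real.arctan (a * t))
        (1 / (1 + (a * t) ^ 2) * a) t :=
      (Real.hasDerivAt_arctan (a * t)).comp t hlin2
    have htot := ((hA.sub hB).add (harc1.const_mul (2 * b / a))).sub
      (harc2.const_mul (2 / a))
    have heq : (1 * Real.log (b ^ 2 + a ^ 2 * t ^ 2) + t * (a ^ 2 * (2 * t) / (b ^ 2 + a ^ 2 * t ^ 2)))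
        - (1 * Real.log (1 + a ^ 2 * t ^ 2) + t * (a ^ 2 * (2 * t) / (1 + a ^ 2 * t ^ 2)))
        + (2 * b / a) * (1 / (1 + (a * t / b) ^ 2) * (a / b))
        - (2 / a) * (1 / (1 + (a * t) ^ 2) * a)
        = Real.log (1 + p / (1 + (4 * q / π ^ 2) * t ^ 2)) := by
      have hlog : Real.log (b ^ 2 + a ^ 2 * t ^ 2) - Real.log (1 + a ^ 2 * t ^ 2)
          = Real.log (1 + p / (1 + (4 * q / π ^ 2) * t ^ 2)) := by
        rw [← Real.log_div hD1.ne' hD2.ne']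
        congr 1
        rw [← ha2, hb2]
        field_simp
        ring
      have hbb : (1 + (a * t / b) ^ 2) = (b ^ 2 + a ^ 2 * t ^ 2) / b ^ 2 := by
        field_simp
      have hrat : t * (a ^ 2 * (2 * t) / (b ^ 2 + a ^ 2 * t ^ 2))
          - t * (a ^ 2 * (2 * t) / (1 + a ^ 2 * t ^ 2))
          + (2 * b / a) * (1 / (1 + (a * t / b) ^ 2) * (a / b))
          - (2 / a) * (1 / (1 + (a * t) ^ 2) * a) = 0 := by
        rw [hbb]
        have h1 : (1 + (a * t) ^ 2) = 1 + a ^ 2 * t ^ 2 := by ring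
        rw [h1]
        field_simp
        ring
      calc _ = (Real.log (b ^ 2 + a ^ 2 * t ^ 2) - Real.log (1 + a ^ 2 * t ^ 2))
            + (t * (a ^ 2 * (2 * t) / (b ^ 2 + a ^ 2 * t ^ 2))
              - t * (a ^ 2 * (2 * t) / (1 + a ^ 2 * t ^ 2))
              + (2 * b / a) * (1 / (1 + (a * t / b) ^ 2) * (a / b))
              - (2 / a) * (1 / (1 + (a * t) ^ 2) * a)) := by ring
        _ = _ := by rw [hrat, hlog, add_zero]
    rw [heq] at htot
    exact htot
  have hint : IntervalIntegrable (fun t => Real.log (1 + p / (1 + (4 * q / π ^ 2) * t ^ 2)))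
      MeasureTheory.volume 0 (π / 2) := by
    apply Continuous.intervalIntegrable
    apply Continuous.log
    · exact continuous_const.add (Continuous.div continuous_const (by fun_prop)
        (fun x => by positivity))
    · intro x
      have h2 : (0:ℝ) < 1 + (4 * q / π ^ 2) * x ^ 2 := by positivity
      have : 0 ≤ p / (1 + (4 * q / π ^ 2) * x ^ 2) := by positivity
      linarith
  have hI := intervalIntegral.integral_eq_sub_of_hasDerivAt hderiv hint
  rw [hI]
  have haπ : a * (π / 2) = Real.sqrt q := by
    rw [ha_def]; field_simp
  have hF0 : F 0 = 0 := by
    simp [hF]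
  have hq2 : a ^ 2 * (π / 2) ^ 2 = q := by
    rw [← mul_pow, haπ, Real.sq_sqrt hq.le]
  have hFπ : F (π / 2) = (π / 2) * Real.log (1 + p + q) - (π / 2) * Real.log (1 + q)
      + (2 * b / a) * Real.arctan (Real.sqrt q / b) - (2 / a) * Real.arctan (Real.sqrt q) := by
    rw [hF]
    simp only [hq2, hb2]
    rw [haπ]
  rw [hF0, hFπ, sub_zero]
  have hsd1 : Real.sqrt ((1 + p) / q) = b / Real.sqrt q := by
    rw [hb_def, Real.sqrt_div (by linarith : (0:ℝ) ≤ 1 + p)]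
  have hsd2 : Real.sqrt (q / (1 + p)) = Real.sqrt q / b := by
    rw [hb_def, Real.sqrt_div hq.le]
  rw [hsd1, hsd2, Real.log_div (by positivity) (by positivity)]
  rw [ha_def]
  field_simp
end

section
/- For every real P ≥ 0, the function F(u) = (1/2)·log₂(1 + (√P + √u)²) − (1/4)·log₂(4u) on (0, ∞) attains its minimum at u = P+1; that is, F(u) ≥ F(P+1) for all u > 0. -/
open Real

/-- Optimization over the reduced interference power in Lemma 2: the function
`F(u) = (1/2)·log₂(1+(√P+√u)²) − (1/4)·log₂(4u)` on `(0,∞)` attains its minimum at `u = P+1`. -/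
theorem stmt_15 (P : ℝ) (hP : 0 ≤ P) :
    ∀ u : ℝ, 0 < u →
      (1 / 2) * logb 2 (1 + (Real.sqrt P + Real.sqrt (P + 1)) ^ 2)
          - (1 / 4) * logb 2 (4 * (P + 1))
      ≤ (1 / 2) * logb 2 (1 + (Real.sqrt P + Real.sqrt u) ^ 2)
          - (1 / 4) * logb 2 (4 * u) := by
  intro u hu
  have hPu : (0:ℝ) < P + 1 := by linarith
  set s := Real.sqrt P with hs
  set t := Real.sqrt u with ht
  set c := Real.sqrt (P + 1) with hc
  have hs0 : 0 ≤ s := Real.sqrt_nonneg _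
  have ht0 : 0 ≤ t := Real.sqrt_nonneg _
  have hc0 : 0 ≤ c := Real.sqrt_nonneg _
  have hs2 : s ^ 2 = P := Real.sq_sqrt hP
  have ht2 : t ^ 2 = u := Real.sq_sqrt hu.le
  have hc2 : c ^ 2 = P + 1 := Real.sq_sqrt hPu.le
  have hA : (0:ℝ) < 1 + (s + t) ^ 2 := by positivity
  have hB : (0:ℝ) < 1 + (s + c) ^ 2 := by positivity
  have h1 : 2 * t * (s + c) ≤ 1 + (s + t) ^ 2 := by nlinarith [sq_nonneg (c - t)]
  have h2 : (2 * t * (s + c)) ^ 2 ≤ (1 + (s + t) ^ 2) ^ 2 := by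
    apply pow_le_pow_left₀ (by positivity) h1
  have hcs : c ^ 2 = s ^ 2 + 1 := by rw [hs2, hc2]
  have hBeq : 1 + (s + c) ^ 2 = 2 * c * (c + s) := by linear_combination -hcs
  have key : (1 + (s + c) ^ 2) ^ 2 * (4 * u) ≤ (1 + (s + t) ^ 2) ^ 2 * (4 * (P + 1)) := by
    have h3 := mul_le_mul_of_nonneg_right h2 (show (0:ℝ) ≤ 4 * c ^ 2 by positivity)
    calc (1 + (s + c) ^ 2) ^ 2 * (4 * u) = (2 * c * (c + s)) ^ 2 * (4 * t ^ 2) := by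
            rw [hBeq, ht2]
      _ = (2 * t * (s + c)) ^ 2 * (4 * c ^ 2) := by ring
      _ ≤ (1 + (s + t) ^ 2) ^ 2 * (4 * c ^ 2) := h3
      _ = (1 + (s + t) ^ 2) ^ 2 * (4 * (P + 1)) := by rw [hc2]
  have hlog : logb 2 ((1 + (s + c) ^ 2) ^ 2 * (4 * u))
      ≤ logb 2 ((1 + (s + t) ^ 2) ^ 2 * (4 * (P + 1))) :=
    Real.logb_le_logb_of_le one_lt_two (by positivity) key
  have e1 : logb 2 ((1 + (s + c) ^ 2) ^ 2 * (4 * u))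
      = 2 * logb 2 (1 + (s + c) ^ 2) + logb 2 (4 * u) := by
    rw [Real.logb_mul (by positivity) (by positivity), Real.logb_pow]; norm_num
  have e2 : logb 2 ((1 + (s + t) ^ 2) ^ 2 * (4 * (P + 1)))
      = 2 * logb 2 (1 + (s + t) ^ 2) + logb 2 (4 * (P + 1)) := by
    rw [Real.logb_mul (by positivity) (by positivity), Real.logb_pow]; norm_num
  rw [e1, e2] at hlog
  linarith
end

section
/- Let P > 0 and S ≥ 0 be real, and define g(α) = (1/2)·ln(1 + αP/(2 + (1−α)P + 2S)) + (1/4)·ln(1 + (1−α)P/2) for α ∈ [0,1]. Set α* = min{1, max{0, (P+2−2S)/P}}. Then g(α) ≤ g(α*) for every α ∈ [0,1]. -/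
open Real

section Aux

variable (S : ℝ)

private noncomputable def fAux (S : ℝ) : ℝ → ℝ :=
  fun t => (1/4) * Real.log (2 + t) - (1/2) * Real.log (2 + t + 2*S)

private lemma fAux_hasDeriv (hS : 0 ≤ S) {t : ℝ} (ht : 0 ≤ t) :
    HasDerivAt (fAux S) ((1/4) * (2+t)⁻¹ - (1/2) * (2+t+2*S)⁻¹) t := by
  have h1 : (0:ℝ) < 2 + t := by linarith
  have h2 : (0:ℝ) < 2 + t + 2*S := by linarith
  have d1 : HasDerivAt (fun t : ℝ => Real.log (2 + t)) ((2+t)⁻¹) t := by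
    have : HasDerivAt (fun t : ℝ => 2 + t) 1 t := (hasDerivAt_id t).const_add 2
    simpa using this.log h1.ne'
  have d2 : HasDerivAt (fun t : ℝ => Real.log (2 + t + 2*S)) ((2+t+2*S)⁻¹) t := by
    have : HasDerivAt (fun t : ℝ => 2 + t + 2*S) 1 t :=
      ((hasDerivAt_id t).const_add 2).add_const (2*S)
    simpa using this.log h2.ne'
  exact (d1.const_mul (1/4)).sub (d2.const_mul (1/2))

private lemma fAux_deriv_eq (hS : 0 ≤ S) {t : ℝ} (ht : 0 ≤ t) :
    deriv (fAux S) t = (2*S - 2 - t) / (4 * (2+t) * (2+t+2*S)) := by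
  have h1 : (0:ℝ) < 2 + t := by linarith
  have h2 : (0:ℝ) < 2 + t + 2*S := by linarith
  rw [(fAux_hasDeriv S hS ht).deriv]
  field_simp
  ring

private lemma fAux_mono (hS : 0 ≤ S) {a b : ℝ} (ha : 0 ≤ a) (hab : a ≤ b)
    (hb : b ≤ 2*S - 2) : fAux S a ≤ fAux S b := by
  have key : MonotoneOn (fAux S) (Set.Icc a b) := by
    apply monotoneOn_of_deriv_nonneg (convex_Icc a b)
    · intro x hx
      have hx0 : 0 ≤ x := le_trans ha hx.1
      exact ((fAux_hasDeriv S hS hx0).differentiableAt.continuousAt).continuousWithinAt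
    · intro x hx
      rw [interior_Icc] at hx
      have hx0 : 0 ≤ x := le_trans ha hx.1.le
      exact (fAux_hasDeriv S hS hx0).differentiableAt.differentiableWithinAt
    · intro x hx
      rw [interior_Icc] at hx
      have hx0 : 0 ≤ x := le_trans ha hx.1.le
      rw [fAux_deriv_eq S hS hx0]
      apply div_nonneg
      · nlinarith [hx.2]
      · nlinarith
  exact key (Set.left_mem_Icc.2 hab) (Set.right_mem_Icc.2 hab) hab

private lemma fAux_anti (hS : 0 ≤ S) {a b : ℝ} (ha : 0 ≤ a) (ha2 : 2*S - 2 ≤ a)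
    (hab : a ≤ b) : fAux S b ≤ fAux S a := by
  have key : AntitoneOn (fAux S) (Set.Icc a b) := by
    apply antitoneOn_of_deriv_nonpos (convex_Icc a b)
    · intro x hx
      have hx0 : 0 ≤ x := le_trans ha hx.1
      exact ((fAux_hasDeriv S hS hx0).differentiableAt.continuousAt).continuousWithinAt
    · intro x hx
      rw [interior_Icc] at hx
      have hx0 : 0 ≤ x := le_trans ha hx.1.le
      exact (fAux_hasDeriv S hS hx0).differentiableAt.differentiableWithinAt
    · intro x hx
      rw [interior_Icc] at hx
      have hx0 : 0 ≤ x := le_trans ha hx.1.le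
      rw [fAux_deriv_eq S hS hx0]
      apply div_nonpos_of_nonpos_of_nonneg
      · nlinarith [hx.1]
      · nlinarith
  exact key (Set.left_mem_Icc.2 hab) (Set.right_mem_Icc.2 hab) hab

private lemma g_eq (P : ℝ) (hP : 0 < P) (hS : 0 ≤ S) {β : ℝ} (hβ : β ∈ Set.Icc (0:ℝ) 1) :
    (1 / 2) * Real.log (1 + β * P / (2 + (1 - β) * P + 2 * S))
      + (1 / 4) * Real.log (1 + (1 - β) * P / 2)
    = (1/2) * Real.log (2 + P + 2*S) - (1/4) * Real.log 2 + fAux S ((1 - β) * P) := by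
  obtain ⟨hβ0, hβ1⟩ := hβ
  have ht0 : 0 ≤ (1 - β) * P := mul_nonneg (by linarith) hP.le
  have hD : (0:ℝ) < 2 + (1 - β) * P + 2 * S := by linarith
  have hN : (0:ℝ) < 2 + P + 2 * S := by linarith
  have hA : (0:ℝ) < 2 + (1 - β) * P := by linarith
  have e1 : 1 + β * P / (2 + (1 - β) * P + 2 * S)
      = (2 + P + 2*S) / (2 + (1 - β) * P + 2 * S) := by
    field_simp; ring
  have e2 : 1 + (1 - β) * P / 2 = (2 + (1 - β) * P) / 2 := by ring
  rw [e1, e2, Real.log_div hN.ne' hD.ne', Real.log_div hA.ne' (by norm_num)]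
  unfold fAux
  ring

end Aux

/-- Optimization over the power-split parameter `α` in Lemma 4: the function
`g(α) = (1/2)·ln(1 + αP/(2+(1−α)P+2S)) + (1/4)·ln(1+(1−α)P/2)` on `[0,1]` is maximized at
`α* = min{1, max{0, (P+2−2S)/P}}`. -/
theorem stmt_16 (P S : ℝ) (hP : 0 < P) (hS : 0 ≤ S) :
    ∀ α ∈ Set.Icc (0 : ℝ) 1,
      (1 / 2) * Real.log (1 + α * P / (2 + (1 - α) * P + 2 * S))
          + (1 / 4) * Real.log (1 + (1 - α) * P / 2)
      ≤ (1 / 2) * Real.log (1 + (min 1 (max 0 ((P + 2 - 2 * S) / P))) * P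
              / (2 + (1 - min 1 (max 0 ((P + 2 - 2 * S) / P))) * P + 2 * S))
          + (1 / 4) * Real.log (1 + (1 - min 1 (max 0 ((P + 2 - 2 * S) / P))) * P / 2) := by
  intro α hα
  set αs : ℝ := min 1 (max 0 ((P + 2 - 2 * S) / P)) with hαs
  have hαs_mem : αs ∈ Set.Icc (0:ℝ) 1 :=
    ⟨le_min (by norm_num) (le_max_left 0 _), min_le_left _ _⟩
  rw [g_eq S P hP hS hα, g_eq S P hP hS hαs_mem]
  have hts : (1 - αs) * P = min P (max 0 (2*S - 2)) := by
    rcases le_or_gt (P + 2 - 2*S) 0 with h | h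
    · have h1 : (P + 2 - 2 * S) / P ≤ 0 := div_nonpos_of_nonpos_of_nonneg h hP.le
      have : αs = 0 := by
        rw [hαs, max_eq_left h1, min_eq_right (by norm_num)]
      rw [this, max_eq_right (by linarith : (0:ℝ) ≤ 2*S - 2),
        min_eq_left (by linarith : P ≤ 2*S - 2)]
      ring
    · have h1 : 0 < (P + 2 - 2 * S) / P := div_pos h hP
      rcases le_or_gt 1 ((P + 2 - 2*S) / P) with h2 | h2
      · have hP2 : P ≤ P + 2 - 2*S := by
          have := (one_le_div hP).1 h2; linarith
        have : αs = 1 := by rw [hαs, max_eq_right h1.le, min_eq_left h2]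
        rw [this, max_eq_left (by linarith), min_eq_right (by linarith)]
        ring
      · have : αs = (P + 2 - 2*S) / P := by
          rw [hαs, max_eq_right h1.le, min_eq_right h2.le]
        rw [this]
        have hv : (1 - (P + 2 - 2*S) / P) * P = 2*S - 2 := by
          field_simp; ring
        rw [hv]
        have hlt : 2*S - 2 < P := by
          have := (div_lt_one hP).1 h2; linarith
        rcases le_or_gt (2*S - 2) 0 with h3 | h3
        · -- then (P+2-2S)/P ≥ 1, contradiction with h2
          exfalso
          have : 1 ≤ (P + 2 - 2*S) / P := (one_le_div hP).2 (by linarith)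
          linarith
        · rw [max_eq_right h3.le, min_eq_right hlt.le]
  have hα0 : 0 ≤ (1 - α) * P := mul_nonneg (by linarith [hα.1, hα.2]) hP.le
  have hαP : (1 - α) * P ≤ P := by nlinarith [hα.1, hα.2]
  have key : fAux S ((1 - α) * P) ≤ fAux S ((1 - αs) * P) := by
    rw [hts]
    rcases le_or_gt (2*S - 2) 0 with h | h
    · rw [max_eq_left h, min_eq_right hP.le]
      exact fAux_anti S hS le_rfl h hα0
    · rw [max_eq_right h.le]
      rcases le_or_gt P (2*S - 2) with h2 | h2
      · rw [min_eq_left h2]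
        exact fAux_mono S hS hα0 hαP h2
      · rw [min_eq_right h2.le]
        rcases le_or_gt ((1 - α) * P) (2*S - 2) with h3 | h3
        · exact fAux_mono S hS hα0 h3 le_rfl
        · exact fAux_anti S hS h.le le_rfl h3.le
  linarith
end
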